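/- 𝔡-Abel formula: if Z is the arithmetic grid z_i = a + bi (a, b ∈ K) and (p_n) is the basic sequence of the delta operator 𝔡, then the generalized Gončarov polynomials satisfy (x − a − nb)·t_n(x; 𝔡, Z) = (x − a)·p_n(x − a − nb) for all n ≥ 1. -/
import Mathlib


open Polynomial

/-- The shift operator `E_a : K[x] → K[x]`, `f(x) ↦ f(x+a)`, as a linear endomorphism. -/
noncomputable def shiftOp (K : Type*) [Field K] (a : K) : Module.End K (Polynomial K) :=
  (aeval (X + C a) : Polynomial K →ₐ[K] Polynomial K).toLinearMap

/-- A linear operator on `K[x]` is shift-invariant if it commutes with every shift `E_a`. -/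
def IsShiftInvariant {K : Type*} [Field K] (s : Module.End K (Polynomial K)) : Prop :=
  ∀ a : K, s ∘ₗ shiftOp K a = shiftOp K a ∘ₗ s

/-- A delta operator: shift-invariant and sends `X` to a nonzero constant. -/
def IsDeltaOperator {K : Type*} [Field K] (d : Module.End K (Polynomial K)) : Prop :=
  IsShiftInvariant d ∧ ∃ c : K, c ≠ 0 ∧ d X = C c

/-- The sequence of basic polynomials of a delta operator `d`. -/
def IsBasicSequence {K : Type*} [Field K] (d : Module.End K (Polynomial K))
    (p : ℕ → Polynomial K) : Prop :=
  p 0 = 1 ∧ (∀ n, 1 ≤ n → (p n).eval 0 = 0) ∧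
    ∀ n, 1 ≤ n → d (p n) = (n : K) • p (n - 1)

/-- The generalized Gončarov basis associated with the pair `(d, z)`:
`deg t_n = n` and `ε_{z_i}(d^i t_n) = n! δ_{i,n}`. -/
def IsGoncarovBasis {K : Type*} [Field K] (d : Module.End K (Polynomial K))
    (z : ℕ → K) (t : ℕ → Polynomial K) : Prop :=
  ∀ n, (t n).natDegree = n ∧
    ∀ i, ((d ^ i) (t n)).eval (z i) = if i = n then (n.factorial : K) else 0

section Aux

set_option linter.unusedSectionVars false
variable {K : Type*} [Field K] [CharZero K]

lemma shiftOp_apply (u : K) (f : K[X]) : shiftOp K u f = f.comp (X + C u) :=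
  (comp_eq_aeval ..).symm

lemma shift_inv_apply {s : Module.End K (Polynomial K)} (hs : IsShiftInvariant s) (u : K)
    (f : K[X]) : s (f.comp (X + C u)) = (s f).comp (X + C u) := by
  have := congrArg (fun L => L f) (hs u)
  simpa [shiftOp_apply] using this

theorem expand_shiftInv {s : Module.End K (Polynomial K)} (hs : IsShiftInvariant s) (f : K[X])
    {m : ℕ} (hf : f.natDegree ≤ m) :
    s f = ∑ k ∈ Finset.range (m + 1), eval 0 (s (X ^ k)) • hasseDeriv k f := by
  apply Polynomial.funext
  intro u
  have h1 : eval u (s f) = eval 0 (s (f.comp (X + C u))) := by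
    rw [shift_inv_apply hs, eval_comp]; simp
  have h2 : f.comp (X + C u) = ∑ j ∈ Finset.range (m + 1),
      eval u (hasseDeriv j f) • X ^ j := by
    have ht : (taylor u f).natDegree < m + 1 := by
      rw [natDegree_taylor]; omega
    have := (taylor u f).as_sum_range' (m + 1) ht
    rw [taylor_apply] at this
    rw [this]
    refine Finset.sum_congr rfl fun j _ => ?_
    rw [smul_X_eq_monomial, ← taylor_coeff, taylor_apply]
  rw [h1, h2, map_sum]
  simp only [map_smul, eval_finset_sum, eval_smul, smul_eq_mul]
  ring_nf
  refine Finset.sum_congr rfl fun j _ => ?_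
  ring

lemma hasseDeriv_hasseDeriv (j k : ℕ) (f : K[X]) :
    hasseDeriv j (hasseDeriv k f) = (j + k).choose j • hasseDeriv (j + k) f := by
  have := congrArg (fun L => L f) (hasseDeriv_comp (R := K) j k)
  simpa using this

/-- Any two shift-invariant operators commute. -/
theorem shiftInv_comm {s₁ s₂ : Module.End K (Polynomial K)} (h₁ : IsShiftInvariant s₁)
    (h₂ : IsShiftInvariant s₂) (f : K[X]) : s₁ (s₂ f) = s₂ (s₁ f) := by
  set m := f.natDegree with hm
  have key : ∀ (s t : Module.End K (Polynomial K)), IsShiftInvariant s → IsShiftInvariant t →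
      s (t f) = ∑ k ∈ Finset.range (m + 1), ∑ j ∈ Finset.range (m + 1),
        (eval 0 (t (X ^ k)) * eval 0 (s (X ^ j)) * ((j + k).choose j : K)) •
          hasseDeriv (j + k) f := by
    intro s t hs ht
    rw [expand_shiftInv ht f (le_refl m), map_sum]
    refine Finset.sum_congr rfl fun k _ => ?_
    rw [map_smul, expand_shiftInv hs (hasseDeriv k f)
      (le_trans (natDegree_hasseDeriv_le f k) (Nat.sub_le m k)), Finset.smul_sum]
    refine Finset.sum_congr rfl fun j _ => ?_
    rw [hasseDeriv_hasseDeriv, ← Nat.cast_smul_eq_nsmul K ((j + k).choose j), smul_smul,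
      smul_smul]
  rw [key s₁ s₂ h₁ h₂, key s₂ s₁ h₂ h₁, Finset.sum_comm]
  refine Finset.sum_congr rfl fun k _ => Finset.sum_congr rfl fun j _ => ?_
  have hch : (j + k).choose j = (k + j).choose k := by
    rw [add_comm k j, ← Nat.choose_symm (Nat.le_add_right j k)]
    congr 1
    omega
  rw [add_comm j k, ← hch]
  congr 1
  ring

variable {d : Module.End K (Polynomial K)}

lemma delta_one (hd : IsDeltaOperator d) : d 1 = 0 := by
  obtain ⟨hsi, c, hc, hdX⟩ := hd
  have h := shift_inv_apply hsi 1 X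
  rw [X_comp, hdX, map_add, hdX, C_comp] at h
  have : d (C 1) = 0 := (add_eq_left).mp h
  simpa using this

lemma delta_C (hd : IsDeltaOperator d) (a : K) : d (C a) = 0 := by
  have : (C a : K[X]) = a • 1 := by rw [smul_eq_C_mul, mul_one]
  rw [this, map_smul, delta_one hd, smul_zero]

lemma delta_coeff (hd : IsDeltaOperator d) (f : K[X]) {m : ℕ} (hf : f.natDegree ≤ m) (q : ℕ) :
    (d f).coeff q = ∑ k ∈ Finset.range (m + 1),
      eval 0 (d (X ^ k)) * (((q + k).choose k : K) * f.coeff (q + k)) := by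
  rw [expand_shiftInv hd.1 f hf, finset_sum_coeff]
  refine Finset.sum_congr rfl fun k _ => ?_
  rw [coeff_smul, hasseDeriv_coeff, smul_eq_mul]

lemma delta_eval0_X0 (hd : IsDeltaOperator d) : eval 0 (d (X ^ 0)) = 0 := by
  rw [pow_zero, delta_one hd, eval_zero]

lemma delta_eval0_X1 {c : K} (hdX : d X = C c) : eval 0 (d (X ^ 1)) = c := by
  rw [pow_one, hdX, eval_C]

/-- A delta operator drops the degree of a non-constant polynomial by exactly one,
and doesn't kill it. -/
lemma delta_natDegree (hd : IsDeltaOperator d) {f : K[X]} (hf : 1 ≤ f.natDegree) :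
    d f ≠ 0 ∧ (d f).natDegree = f.natDegree - 1 := by
  obtain ⟨c, hc, hdX⟩ := hd.2
  set m := f.natDegree with hm
  have hupper : ∀ q, m - 1 < q → (d f).coeff q = 0 := by
    intro q hq
    rw [delta_coeff hd f (le_refl m)]
    refine Finset.sum_eq_zero fun k _ => ?_
    rcases Nat.eq_zero_or_pos k with hk | hk
    · subst hk; rw [delta_eval0_X0 hd, zero_mul]
    · have : m < q + k := by omega
      rw [coeff_eq_zero_of_natDegree_lt this, mul_zero, mul_zero]
  have hcoeff : (d f).coeff (m - 1) = c * ((m : K) * f.coeff m) := by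
    rw [delta_coeff hd f (le_refl m)]
    have h1 : (1 : ℕ) ∈ Finset.range (m + 1) := Finset.mem_range.mpr (by omega)
    rw [Finset.sum_eq_single_of_mem 1 h1]
    · have hm1 : m - 1 + 1 = m := by omega
      rw [delta_eval0_X1 hdX, hm1]
      simp
    · intro k _ hk1
      rcases Nat.eq_zero_or_pos k with hk | hk
      · subst hk; rw [delta_eval0_X0 hd, zero_mul]
      · have hk2 : 2 ≤ k := by omega
        have : m < m - 1 + k := by omega
        rw [coeff_eq_zero_of_natDegree_lt this, mul_zero, mul_zero]
  have hne : (d f).coeff (m - 1) ≠ 0 := by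
    rw [hcoeff]
    have hf0 : f ≠ 0 := by
      intro h0
      rw [hm, h0] at hf
      simp at hf
    have h1 : f.coeff m ≠ 0 := by
      rw [hm, ← leadingCoeff]
      exact leadingCoeff_ne_zero.mpr hf0
    have h2 : (m : K) ≠ 0 := Nat.cast_ne_zero.mpr (by omega)
    exact mul_ne_zero hc (mul_ne_zero h2 h1)
  constructor
  · intro h0; rw [h0] at hne; simp at hne
  · refine le_antisymm (natDegree_le_iff_coeff_eq_zero.mpr hupper) (le_natDegree_of_ne_zero hne)

/-- Uniqueness of polynomials with vanishing Gončarov data. -/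
lemma goncarov_unique (hd : IsDeltaOperator d) :
    ∀ n : ℕ, ∀ z : ℕ → K, ∀ h : K[X], h.natDegree ≤ n →
      (∀ i ≤ n, eval (z i) ((d ^ i) h) = 0) → h = 0 := by
  intro n
  induction n with
  | zero =>
    intro z h hdeg hvals
    have h0 := hvals 0 le_rfl
    rw [pow_zero, Module.End.one_apply] at h0
    rw [eq_C_of_natDegree_le_zero hdeg] at h0 ⊢
    rw [eval_C] at h0
    rw [h0, map_zero]
  | succ n IH =>
    intro z h hdeg hvals
    by_cases hc : h.natDegree = 0
    · have h0 := hvals 0 (by omega)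
      rw [pow_zero, Module.End.one_apply] at h0
      rw [eq_C_of_natDegree_le_zero (le_of_eq hc)] at h0 ⊢
      rw [eval_C] at h0
      rw [h0, map_zero]
    · exfalso
      have h1 : 1 ≤ h.natDegree := by omega
      obtain ⟨hne, hdeg'⟩ := delta_natDegree hd h1
      have hdh : (d h).natDegree ≤ n := by omega
      have : d h = 0 := by
        refine IH (fun i => z (i + 1)) (d h) hdh fun i hi => ?_
        have := hvals (i + 1) (by omega)
        rw [pow_succ, Module.End.mul_apply] at this
        exact this
      exact hne this

variable {p : ℕ → Polynomial K}

lemma basic_natDegree (hd : IsDeltaOperator d) (hp : IsBasicSequence d p) :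
    ∀ n, p n ≠ 0 ∧ (p n).natDegree = n := by
  intro n
  induction n with
  | zero => rw [hp.1]; exact ⟨one_ne_zero, natDegree_one⟩
  | succ n IH =>
    have hd1 : d (p (n + 1)) = ((n + 1 : ℕ) : K) • p n := by
      have := hp.2.2 (n + 1) (by omega)
      simpa using this
    have hsne : ((n + 1 : ℕ) : K) • p n ≠ 0 :=
      smul_ne_zero (Nat.cast_ne_zero.mpr (by omega)) IH.1
    have hnc : 1 ≤ (p (n + 1)).natDegree := by
      by_contra hcon
      have h0 : (p (n + 1)).natDegree = 0 := by omega
      have : d (p (n + 1)) = 0 := by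
        rw [eq_C_of_natDegree_le_zero (le_of_eq h0)]
        exact delta_C hd _
      rw [hd1] at this
      exact hsne this
    obtain ⟨hne, hdeg⟩ := delta_natDegree hd hnc
    rw [hd1] at hdeg
    rw [smul_eq_C_mul, natDegree_C_mul (Nat.cast_ne_zero.mpr (Nat.succ_ne_zero n)), IH.2] at hdeg
    constructor
    · intro h0; rw [h0] at hnc; simp at hnc
    · omega

lemma basic_pow_apply (hd : IsDeltaOperator d) (hp : IsBasicSequence d p) :
    ∀ j n : ℕ, j ≤ n → (d ^ j) (p n) = ((n.descFactorial j : ℕ) : K) • p (n - j) := by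
  intro j
  induction j with
  | zero => intro n _; simp
  | succ j IH =>
    intro n hj
    rw [pow_succ', Module.End.mul_apply, IH n (by omega), map_smul]
    have h1 : 1 ≤ n - j := by omega
    rw [hp.2.2 (n - j) h1, smul_smul, Nat.descFactorial_succ]
    have : n - j - 1 = n - (j + 1) := by omega
    rw [this]
    congr 1
    push_cast [Nat.cast_sub (by omega : j ≤ n)]
    ring

lemma basic_eval0_pow (hd : IsDeltaOperator d) (hp : IsBasicSequence d p) (j n : ℕ) :
    eval 0 ((d ^ j) (p n)) = if j = n then (n.factorial : K) else 0 := by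
  rcases le_or_gt j n with hj | hj
  · rw [basic_pow_apply hd hp j n hj, eval_smul, smul_eq_mul]
    rcases eq_or_lt_of_le hj with he | hlt
    · subst he
      simp [Nat.descFactorial_self, hp.1]
    · rw [if_neg (by omega), hp.2.1 (n - j) (by omega), mul_zero]
  · have hzero : (d ^ (n + 1)) (p n) = 0 := by
      rw [pow_succ', Module.End.mul_apply, basic_pow_apply hd hp n n le_rfl, map_smul]
      simp [hp.1, delta_one hd]
    have hsplit : (d ^ j) (p n) = (d ^ (j - (n + 1))) ((d ^ (n + 1)) (p n)) := by
      rw [← Module.End.mul_apply, ← pow_add]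
      congr 2
      omega
    rw [hsplit, hzero, map_zero, eval_zero, if_neg (by omega)]

/-- The Pincherle derivative `[d, X]` of an operator. -/
noncomputable def pinch {K : Type*} [Field K] (d : Module.End K (Polynomial K)) :
    Module.End K (Polynomial K) :=
  d * LinearMap.mulLeft K (X : K[X]) - LinearMap.mulLeft K (X : K[X]) * d

lemma pinch_apply (f : K[X]) : pinch d f = d (X * f) - X * d f := by
  simp [pinch, Module.End.mul_apply, LinearMap.mulLeft_apply]

lemma shiftOp_mul (u : K) (f g : K[X]) : shiftOp K u (f * g) = shiftOp K u f * shiftOp K u g :=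
  map_mul (aeval (X + C u) : Polynomial K →ₐ[K] Polynomial K) f g

lemma shiftOp_X (u : K) : shiftOp K u (X : K[X]) = X + C u := by
  simp [shiftOp]

lemma pinch_shiftInv (hd : IsDeltaOperator d) : IsShiftInvariant (pinch d) := by
  intro u
  refine LinearMap.ext fun f => ?_
  have hcomm : ∀ g : K[X], d (shiftOp K u g) = shiftOp K u (d g) := by
    intro g
    have := congrArg (fun L => L g) (hd.1 u)
    simpa using this
  simp only [LinearMap.comp_apply, pinch, LinearMap.sub_apply, Module.End.mul_apply,
    LinearMap.mulLeft_apply]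
  rw [map_sub, shiftOp_mul, shiftOp_X, ← hcomm, ← hcomm, shiftOp_mul, shiftOp_X]
  have key : ∀ g : K[X], d ((X + C u) * g) = d (X * g) + C u * d g := by
    intro g
    have h2 : (X + C u) * g = X * g + u • g := by rw [add_mul, smul_eq_C_mul]
    rw [h2, map_add, map_smul, smul_eq_C_mul]
  rw [key]
  ring

lemma pinch_d_comm (hd : IsDeltaOperator d) (f : K[X]) : pinch d (d f) = d (pinch d f) :=
  (shiftInv_comm hd.1 (pinch_shiftInv hd) f).symm

lemma pinch_pow_comm (hd : IsDeltaOperator d) (k : ℕ) :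
    ∀ f : K[X], (d ^ k) (pinch d f) = pinch d ((d ^ k) f) := by
  induction k with
  | zero => intro f; simp
  | succ k IH =>
    intro f
    rw [pow_succ, Module.End.mul_apply, Module.End.mul_apply, ← pinch_d_comm hd, IH (d f)]

/-- Iterated Pincherle formula. -/
lemma iterated_pinch (hd : IsDeltaOperator d) (j : ℕ) (f : K[X]) :
    (d ^ (j + 1)) (X * f) = X * (d ^ (j + 1)) f + (((j + 1 : ℕ)) : K) • (d ^ j) (pinch d f) := by
  induction j with
  | zero =>
    rw [pow_one, pow_zero, Module.End.one_apply, Nat.cast_one, one_smul, pinch_apply]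
    ring
  | succ j IH =>
    have hpa : ∀ g : K[X], d (X * g) = X * d g + pinch d g := by
      intro g; rw [pinch_apply]; ring
    have e1 : (d ^ (j + 1 + 1)) (X * f) = d ((d ^ (j + 1)) (X * f)) := by
      rw [pow_succ', Module.End.mul_apply]
    have e3 : (d ^ (j + 1 + 1)) f = d ((d ^ (j + 1)) f) := by
      rw [pow_succ', Module.End.mul_apply]
    have e4 : d ((d ^ j) (pinch d f)) = (d ^ (j + 1)) (pinch d f) := by
      rw [pow_succ', Module.End.mul_apply]
    rw [e1, IH, map_add, map_smul, hpa ((d ^ (j + 1)) f), ← pinch_pow_comm hd, e4, ← e3]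
    have hc : ((j + 1 + 1 : ℕ) : K) = ((j + 1 : ℕ) : K) + 1 := by push_cast; ring
    rw [hc, add_smul, one_smul]
    ring

lemma delta_natDegree_le (hd : IsDeltaOperator d) (g : K[X]) :
    (d g).natDegree ≤ g.natDegree - 1 := by
  rcases Nat.eq_zero_or_pos g.natDegree with h0 | h1
  · rw [eq_C_of_natDegree_le_zero (le_of_eq h0), delta_C hd]
    simp
  · exact (delta_natDegree hd h1).2.le

/-- Transfer formula: the Pincherle derivative of `p n / X` is `p (n-1)`. -/
lemma transfer (hd : IsDeltaOperator d) (hp : IsBasicSequence d p) {n : ℕ} (hn : 1 ≤ n)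
    {r : K[X]} (hr : p n = X * r) : pinch d r = p (n - 1) := by
  have hpne := (basic_natDegree hd hp n).1
  have hpdeg := (basic_natDegree hd hp n).2
  have hrne : r ≠ 0 := by
    intro h0; rw [h0, mul_zero] at hr; exact hpne hr
  have hrdeg : r.natDegree = n - 1 := by
    have := hpdeg
    rw [hr, natDegree_mul X_ne_zero hrne, natDegree_X] at this
    omega
  have hev : ∀ k, eval 0 ((d ^ k) (pinch d r)) =
      if k = n - 1 then ((n - 1).factorial : K) else 0 := by
    intro k
    have hip := congrArg (eval 0) (iterated_pinch hd k r)
    rw [← hr, basic_eval0_pow hd hp, eval_add, eval_mul, eval_X, zero_mul, zero_add,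
      eval_smul, smul_eq_mul] at hip
    have hk1 : ((k + 1 : ℕ) : K) ≠ 0 := Nat.cast_ne_zero.mpr (by omega)
    by_cases hkn : k = n - 1
    · subst hkn
      rw [if_pos (by omega)] at hip
      rw [if_pos rfl]
      apply mul_left_cancel₀ hk1
      rw [← hip]
      have : n.factorial = (n - 1 + 1) * (n - 1).factorial := by
        rw [← Nat.factorial_succ]
        congr 1
        omega
      rw [this]
      push_cast
      ring
    · rw [if_neg (by omega)] at hip
      rw [if_neg hkn]
      exact (mul_eq_zero.mp hip.symm).resolve_left hk1
  have hdegP : (pinch d r).natDegree ≤ n - 1 := by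
    rw [pinch_apply]
    refine le_trans (natDegree_sub_le _ _) (max_le ?_ ?_)
    · rw [← hr]
      have := delta_natDegree_le hd (p n)
      omega
    · rcases Nat.eq_zero_or_pos r.natDegree with h0 | h1
      · rw [eq_C_of_natDegree_le_zero (le_of_eq h0), delta_C hd, mul_zero]
        simp
      · refine le_trans (natDegree_mul_le) ?_
        rw [natDegree_X]
        have := (delta_natDegree hd h1).2
        omega
  have hdiff : pinch d r - p (n - 1) = 0 := by
    refine goncarov_unique hd (n - 1) (fun _ => 0) _ ?_ ?_
    · refine le_trans (natDegree_sub_le _ _) (max_le hdegP ?_)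
      rw [(basic_natDegree hd hp (n - 1)).2]
    · intro i hi
      rw [map_sub, eval_sub, hev i, basic_eval0_pow hd hp i (n - 1), sub_self]
  exact sub_eq_zero.mp hdiff

lemma d_r_eq (hd : IsDeltaOperator d) (hp : IsBasicSequence d p) {n : ℕ} (hn : 2 ≤ n)
    {r r' : K[X]} (hr : p n = X * r) (hr' : p (n - 1) = X * r') :
    d r = (((n : K) - 1)) • r' := by
  have h1 : d (p n) = (n : K) • p (n - 1) := hp.2.2 n (by omega)
  have h2 : pinch d r = p (n - 1) := transfer hd hp (by omega) hr
  rw [pinch_apply] at h2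
  have h3 : X * d r = ((n : K) - 1) • (X * r') := by
    have h4 : d (X * r) = X * d r + p (n - 1) := by
      rw [← h2]; ring
    rw [← hr, h1, hr'] at h4
    have : (n : K) • (X * r') = X * d r + X * r' := h4
    rw [sub_smul, one_smul, this]
    ring
  refine mul_left_cancel₀ (X_ne_zero (R := K)) ?_
  rw [mul_smul_comm]
  exact h3

end Aux

theorem stmt18 {K : Type*} [Field K] [CharZero K] (d : Module.End K (Polynomial K))
    (hd : IsDeltaOperator d) (p : ℕ → Polynomial K) (hp : IsBasicSequence d p)
    (a b : K) (t : ℕ → Polynomial K)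
    (ht : IsGoncarovBasis d (fun i => a + (i : K) * b) t) :
    ∀ n : ℕ, 1 ≤ n →
      (X - C (a + (n : K) * b)) * t n =
        (X - C a) * (p n).comp (X - C (a + (n : K) * b)) := by
  classical
  have hsi := hd.1
  have hdvd : ∀ n : ℕ, ∃ r : K[X], 1 ≤ n → p n = X * r := by
    intro n
    by_cases hn : 1 ≤ n
    · have hx : (X : K[X]) ∣ p n := X_dvd_iff.mpr
        (by rw [coeff_zero_eq_eval_zero]; exact hp.2.1 n hn)
      obtain ⟨rr, hrr⟩ := hx
      exact ⟨rr, fun _ => hrr⟩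
    · exact ⟨0, fun h => absurd h hn⟩
  choose r hr using hdvd
  have hrfact : ∀ n, 1 ≤ n → r n ≠ 0 ∧ (r n).natDegree = n - 1 := by
    intro n hn
    have hpne := (basic_natDegree hd hp n).1
    have hpdeg := (basic_natDegree hd hp n).2
    have hrne : r n ≠ 0 := fun h0 => hpne (by rw [hr n hn, h0, mul_zero])
    refine ⟨hrne, ?_⟩
    rw [hr n hn, natDegree_mul X_ne_zero hrne, natDegree_X] at hpdeg
    omega
  set A : ℕ → K → K[X] :=
    fun n a' => (X - C a') * (r n).comp (X - C (a' + (n : K) * b)) with hA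
  have hcompd : ∀ (v : K) (g : K[X]), d (g.comp (X - C v)) = (d g).comp (X - C v) := by
    intro v g
    have h := shift_inv_apply hsi (-v) g
    rw [C_neg, ← sub_eq_add_neg] at h
    exact h
  have hAB : ∀ (n : ℕ) (a' : K), 1 ≤ n →
      A n a' = (X * r n + ((n : K) * b) • r n).comp (X - C (a' + (n : K) * b)) := by
    intro n a' hn
    rw [hA]
    simp only
    rw [add_comp, mul_comp, X_comp, smul_comp, smul_eq_C_mul, C_add]
    ring
  have hdB : ∀ n : ℕ, 2 ≤ n → d (X * r n + ((n : K) * b) • r n) =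
      (n : K) • (X * r (n - 1) + (((n - 1 : ℕ) : K) * b) • r (n - 1)) := by
    intro n hn
    have hd_r := d_r_eq hd hp hn (hr n (by omega)) (hr (n - 1) (by omega))
    have htr := transfer hd hp (by omega : 1 ≤ n) (hr n (by omega))
    have hdxr : d (X * r n) = X * d (r n) + p (n - 1) := by
      rw [← htr, pinch_apply]; ring
    rw [map_add, map_smul, hdxr, hd_r, hr (n - 1) (by omega)]
    have hcast : ((n - 1 : ℕ) : K) = (n : K) - 1 := by
      push_cast [Nat.cast_sub (by omega : 1 ≤ n)]; ring
    rw [hcast, mul_smul_comm]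
    module
  have hdA : ∀ (n : ℕ) (a' : K), 2 ≤ n →
      d (A n a') = (n : K) • A (n - 1) (a' + b) := by
    intro n a' hn
    rw [hAB n a' (by omega), hcompd, hdB n hn, smul_comp]
    congr 1
    rw [hAB (n - 1) (a' + b) (by omega)]
    congr 2
    push_cast [Nat.cast_sub (by omega : 1 ≤ n)]
    ring
  have hdA1 : ∀ a' : K, d (A 1 a') = 1 := by
    intro a'
    rw [hAB 1 a' le_rfl, hcompd]
    have hr1deg : (r 1).natDegree = 0 := (hrfact 1 le_rfl).2
    have hdr1 : d (r 1) = 0 := by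
      rw [eq_C_of_natDegree_le_zero (le_of_eq hr1deg)]
      exact delta_C hd _
    have htr := transfer hd hp le_rfl (hr 1 le_rfl)
    rw [pinch_apply, hdr1, mul_zero, sub_zero] at htr
    have hdB1 : d (X * r 1 + (((1 : ℕ) : K) * b) • r 1) = 1 := by
      rw [map_add, map_smul, hdr1, smul_zero, add_zero, htr, hp.1]
    rw [hdB1, one_comp]
  -- Goncarov conditions for the Abel polynomials
  have hG : ∀ n : ℕ, 1 ≤ n → ∀ (a' : K) (i : ℕ),
      eval (a' + (i : K) * b) ((d ^ i) (A n a')) =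
        if i = n then (n.factorial : K) else 0 := by
    intro n
    induction n with
    | zero => omega
    | succ n IH =>
      intro _ a' i
      rcases i with _ | j
      · rw [pow_zero, Module.End.one_apply, if_neg (by omega), hA]
        simp
      · rcases Nat.eq_zero_or_pos n with hn0 | hn1
        · subst hn0
          rw [pow_succ, Module.End.mul_apply, hdA1 a']
          rcases j with _ | k
          · rw [pow_zero, Module.End.one_apply, eval_one, if_pos rfl]
            simp
          · rw [pow_succ, Module.End.mul_apply, delta_one hd, map_zero, eval_zero,
              if_neg (by omega)]
        · rw [pow_succ, Module.End.mul_apply, hdA (n + 1) a' (by omega)]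
          have hsub : n + 1 - 1 = n := rfl
          rw [hsub, map_smul, eval_smul, smul_eq_mul]
          have hpt : a' + ((j + 1 : ℕ) : K) * b = (a' + b) + (j : K) * b := by
            push_cast
            ring
          rw [hpt, IH hn1 (a' + b) j]
          rcases eq_or_ne j n with he | hne
          · subst he
            rw [if_pos rfl, if_pos rfl, Nat.factorial_succ]
            push_cast
            ring
          · rw [if_neg hne, if_neg (by omega), mul_zero]
  -- degree of the Abel polynomials
  have hAdeg : ∀ (n : ℕ) (a' : K), 1 ≤ n → (A n a').natDegree = n := by
    intro n a' hn
    have hct : (r n).comp (X - C (a' + (n : K) * b)) =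
        taylor (-(a' + (n : K) * b)) (r n) := by
      rw [taylor_apply, C_neg, ← sub_eq_add_neg]
    have hcne : (r n).comp (X - C (a' + (n : K) * b)) ≠ 0 := by
      rw [hct]
      intro h0
      exact (hrfact n hn).1 (taylor_injective _ (by rw [h0, map_zero]))
    rw [hA]
    simp only
    rw [natDegree_mul (X_sub_C_ne_zero a') hcne, natDegree_X_sub_C, hct, natDegree_taylor,
      (hrfact n hn).2]
    omega
  intro n hn
  have hEq : t n = A n a := by
    have hdiff : t n - A n a = 0 := by
      refine goncarov_unique hd n (fun i => a + (i : K) * b) _ ?_ ?_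
      · refine le_trans (natDegree_sub_le _ _) (max_le ?_ ?_)
        · exact le_of_eq (ht n).1
        · exact le_of_eq (hAdeg n a hn)
      · intro i _
        rw [map_sub, eval_sub, (ht n).2 i, hG n hn a i, sub_self]
    exact sub_eq_zero.mp hdiff
  rw [hEq, hA]
  simp only
  rw [hr n hn, mul_comp, X_comp]
  ring
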